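/- Fix γ ∈ [−3,0), α ∈ (0,1), θ > 0, and t₀ ∈ (0, 1/2). Let f be a real-valued function defined on (0, t₀] × ℝ³ × ℝ³, fix z₀ = (t₀, x₀, v₀), let S and r₀ be the associated rescaling data, and let f_{z₀}(t,x,v) := f(r₀²t+t₀, r₀³Sx+x₀+r₀²t v₀, r₀Sv+v₀). Then there is a constant C depending only on γ, α, θ such that [f_{z₀}]_{C_x^{α/3}log(1/C_v)^{−θ/2}(Q₁)} ≤ C·(log(1/t₀))^{−θ/2}·[f]_{C_x^{α/3}log(1/C_v)^{−θ}(Q_{√(t₀/2)}(z₀))}. -/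

import Mathlib

noncomputable section

open Real Matrix Set

abbrev V3 := Fin 3 → ℝ

/-- Euclidean norm on `Fin d → ℝ`. -/
def eunorm {d : ℕ} (x : Fin d → ℝ) : ℝ := Real.sqrt (∑ i, (x i) ^ 2)

/-- The Japanese bracket `⟨v⟩ = (1+|v|²)^{1/2}`. -/
def jap {d : ℕ} (v : Fin d → ℝ) : ℝ := Real.sqrt (1 + ∑ i, (v i) ^ 2)

/-- Orthogonal projection matrix onto the line spanned by `v₀` (zero when `v₀ = 0`). -/
def projMat (v₀ : V3) : Matrix (Fin 3) (Fin 3) ℝ :=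
  if v₀ = 0 then 0 else Matrix.of fun i j => v₀ i * v₀ j / (v₀ ⬝ᵥ v₀)

/-- The anisotropic scaling matrix `S`: multiplication by `⟨v₀⟩^{1+γ/2}` orthogonally to
`v₀` and by `⟨v₀⟩^{γ/2}` along `v₀`. -/
def Smat (γ : ℝ) (v₀ : V3) : Matrix (Fin 3) (Fin 3) ℝ :=
  jap v₀ ^ (1 + γ/2) • ((1 : Matrix (Fin 3) (Fin 3) ℝ) - projMat v₀) +
    jap v₀ ^ (γ/2) • projMat v₀

/-- The scaling radius `r₀ = ⟨v₀⟩^{−(1+γ/2)₊} min(1, √(t₀/2))`. -/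
def r0 (γ t₀ : ℝ) (v₀ : V3) : ℝ :=
  jap v₀ ^ (-(max (1 + γ/2) 0)) * min 1 (Real.sqrt (t₀/2))

/-- The kinetic rescaling `z ↦ z₀ ∘ (S z)_{r₀}`. -/
def resc (γ : ℝ) (z₀ z : ℝ × V3 × V3) : ℝ × V3 × V3 :=
  ((r0 γ z₀.1 z₀.2.2) ^ 2 * z.1 + z₀.1,
    ((r0 γ z₀.1 z₀.2.2) ^ 3) • (Smat γ z₀.2.2).mulVec z.2.1 + z₀.2.1 +
      ((r0 γ z₀.1 z₀.2.2) ^ 2 * z.1) • z₀.2.2,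
    (r0 γ z₀.1 z₀.2.2) • (Smat γ z₀.2.2).mulVec z.2.2 + z₀.2.2)

/-- The kinetic cylinder `Q_r = (-r², 0] × B_{r³}(0) × B_r(0)` in `ℝ × ℝ³ × ℝ³`. -/
def Qcyl (r : ℝ) : Set (ℝ × V3 × V3) :=
  {z | z.1 ∈ Set.Ioc (-r ^ 2) 0 ∧ eunorm z.2.1 < r ^ 3 ∧ eunorm z.2.2 < r}

/-- The shifted kinetic cylinder `Q_r(z₀)`. -/
def Qz (r : ℝ) (z₀ : ℝ × V3 × V3) : Set (ℝ × V3 × V3) :=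
  {z | z₀.1 - r ^ 2 < z.1 ∧ z.1 ≤ z₀.1 ∧
    eunorm (z.2.1 - z₀.2.1 - (z.1 - z₀.1) • z₀.2.2) < r ^ 3 ∧
    eunorm (z.2.2 - z₀.2.2) < r}

/-- The log-Hölder seminorm bound `[u]_{C_x^{a/3} log(1/C_v)^{−θ}(Q)} ≤ K`,
stated pointwise. -/
def LogMixedBound (a θ : ℝ) (Q : Set (ℝ × V3 × V3)) (u : ℝ × V3 × V3 → ℝ) (K : ℝ) : Prop :=
  ∀ t x v x' v', (t, x, v) ∈ Q → (t, x', v') ∈ Q →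
    eunorm (x - x') < 1/2 → eunorm (v - v') < 1/2 →
    |u (t, x, v) - u (t, x', v')| ≤
      K * (eunorm (x - x') ^ (a/3) + Real.log (1 / eunorm (v - v')) ^ (-θ))


def q (x : V3) : ℝ := ∑ i, (x i)^2

lemma q_nonneg (x : V3) : 0 ≤ q x := Finset.sum_nonneg fun i _ => sq_nonneg _

lemma eunorm_eq_sqrt_q (x : V3) : eunorm x = Real.sqrt (q x) := rfl

lemma eunorm_nonneg (x : V3) : 0 ≤ eunorm x := Real.sqrt_nonneg _

lemma eunorm_zero : eunorm (0 : V3) = 0 := by simp [eunorm]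

lemma eunorm_eq_zero {x : V3} (h : eunorm x = 0) : x = 0 := by
  have hq : q x = 0 := by
    have := Real.sqrt_eq_zero (q_nonneg x) |>.mp h
    exact this
  funext i
  have := (Finset.sum_eq_zero_iff_of_nonneg (fun i _ => sq_nonneg (x i))).mp hq i (Finset.mem_univ i)
  exact pow_eq_zero_iff (by norm_num) |>.mp this

lemma eunorm_smul (c : ℝ) (x : V3) : eunorm (c • x) = |c| * eunorm x := by
  rw [eunorm_eq_sqrt_q, eunorm_eq_sqrt_q, show q (c • x) = c^2 * q x by
    simp [q, Finset.mul_sum, mul_pow], Real.sqrt_mul (sq_nonneg c), Real.sqrt_sq_eq_abs]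

lemma eunorm_le_mul {x y : V3} {c : ℝ} (hc : 0 ≤ c) (h : q x ≤ c^2 * q y) :
    eunorm x ≤ c * eunorm y := by
  rw [eunorm_eq_sqrt_q, eunorm_eq_sqrt_q]
  calc Real.sqrt (q x) ≤ Real.sqrt (c^2 * q y) := Real.sqrt_le_sqrt h
    _ = c * Real.sqrt (q y) := by
        rw [Real.sqrt_mul (sq_nonneg c), Real.sqrt_sq hc]

lemma jap_one_le (v : V3) : 1 ≤ jap v := by
  have h : Real.sqrt 1 ≤ Real.sqrt (1 + ∑ i, (v i)^2) :=
    Real.sqrt_le_sqrt (by have := Finset.sum_nonneg (fun i (_ : i ∈ Finset.univ) => sq_nonneg (v i)); linarith)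
  simpa [jap] using h

lemma jap_pos (v : V3) : 0 < jap v := lt_of_lt_of_le one_pos (jap_one_le v)

lemma projMat_mulVec {v₀ : V3} (h : v₀ ≠ 0) (w : V3) :
    (projMat v₀).mulVec w = ((v₀ ⬝ᵥ w) / (v₀ ⬝ᵥ v₀)) • v₀ := by
  funext i
  simp [projMat, h, Matrix.mulVec, dotProduct, Fin.sum_univ_three]
  ring

lemma q_expand (s u : ℝ) (a b : V3) :
    q (s • a + u • b) = s^2 * q a + 2*s*u*(a ⬝ᵥ b) + u^2 * q b := by
  simp [q, dotProduct, Fin.sum_univ_three]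
  ring

lemma Smat_mulVec_q (γ : ℝ) (v₀ w : V3) :
    q ((Smat γ v₀).mulVec w) ≤ (jap v₀ ^ max (1 + γ/2) 0)^2 * q w := by
  set A := jap v₀ ^ (1 + γ/2) with hA
  set B := jap v₀ ^ (γ/2) with hB
  set M := jap v₀ ^ max (1 + γ/2) 0 with hM
  have hAp : 0 < A := Real.rpow_pos_of_pos (jap_pos v₀) _
  have hBp : 0 < B := Real.rpow_pos_of_pos (jap_pos v₀) _
  have hAM : A ≤ M := Real.rpow_le_rpow_of_exponent_le (jap_one_le v₀) (le_max_left _ _)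
  have hBM : B ≤ M := Real.rpow_le_rpow_of_exponent_le (jap_one_le v₀)
    (le_trans (by linarith : γ/2 ≤ 1 + γ/2) (le_max_left _ _))
  by_cases h : v₀ = 0
  · subst h
    have : (Smat γ 0).mulVec w = A • w := by
      simp [Smat, projMat, Matrix.add_mulVec, Matrix.smul_mulVec, Matrix.one_mulVec]
      exact rfl
    rw [this, show A • w = A • w + (0:ℝ) • (0:V3) by simp, q_expand]
    have h0 : q (0:V3) = 0 := by simp [q]
    have hd : w ⬝ᵥ (0:V3) = 0 := by simp [dotProduct]
    rw [h0, hd]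
    nlinarith [q_nonneg w, pow_le_pow_left₀ hAp.le hAM 2]
  · have hdd : 0 < v₀ ⬝ᵥ v₀ := by
      refine lt_of_le_of_ne (Finset.sum_nonneg fun i _ => mul_self_nonneg _) fun h' => ?_
      exact h (dotProduct_self_eq_zero.mp h'.symm)
    set c : ℝ := (v₀ ⬝ᵥ w) / (v₀ ⬝ᵥ v₀) with hc
    have hSw : (Smat γ v₀).mulVec w = A • (w - c • v₀) + (B*c) • v₀ := by
      rw [Smat, Matrix.add_mulVec, Matrix.smul_mulVec, Matrix.smul_mulVec,
        Matrix.sub_mulVec, Matrix.one_mulVec, projMat_mulVec h]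
      rw [← hc, smul_smul]
    have horth : (w - c • v₀) ⬝ᵥ (c • v₀) = 0 := by
      have hdd' : (v₀ ⬝ᵥ v₀) ≠ 0 := ne_of_gt hdd
      simp only [hc, dotProduct, Pi.sub_apply, Pi.smul_apply, smul_eq_mul,
        Fin.sum_univ_three] at hdd' ⊢
      have hdd'' : v₀ 0 ^ 2 + v₀ 1 ^ 2 + v₀ 2 ^ 2 ≠ 0 := by simpa [sq] using hdd'
      field_simp
      ring
    have hb : (B*c) • v₀ = B • (c • v₀) := by rw [smul_smul]
    have hqw : q w = q (w - c • v₀) + q (c • v₀) := by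
      have hw : w = (1:ℝ) • (w - c • v₀) + (1:ℝ) • (c • v₀) := by simp
      calc q w = q ((1:ℝ) • (w - c • v₀) + (1:ℝ) • (c • v₀)) := by rw [← hw]
        _ = q (w - c • v₀) + q (c • v₀) := by rw [q_expand, horth]; ring
    have hq1 : q ((Smat γ v₀).mulVec w) =
        A^2 * q (w - c • v₀) + B^2 * q (c • v₀) := by
      rw [hSw, hb, q_expand, horth]; ring
    rw [hq1, hqw]
    nlinarith [q_nonneg (w - c • v₀), q_nonneg (c • v₀), pow_le_pow_left₀ hAp.le hAM 2, pow_le_pow_left₀ hBp.le hBM 2]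

lemma Smat_bound (γ : ℝ) (v₀ w : V3) :
    eunorm ((Smat γ v₀).mulVec w) ≤ jap v₀ ^ max (1 + γ/2) 0 * eunorm w :=
  eunorm_le_mul (Real.rpow_nonneg (jap_pos v₀).le _) (Smat_mulVec_q γ v₀ w)

section r0facts
variable (γ t₀ : ℝ) (v₀ : V3)

lemma r0_pos (ht : 0 < t₀) : 0 < r0 γ t₀ v₀ :=
  mul_pos (Real.rpow_pos_of_pos (jap_pos v₀) _)
    (lt_min one_pos (Real.sqrt_pos.mpr (by linarith)))

lemma r0_le (ht : 0 < t₀) : r0 γ t₀ v₀ ≤ min 1 (Real.sqrt (t₀/2)) := by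
  have h1 : jap v₀ ^ (-(max (1 + γ/2) 0)) ≤ 1 :=
    Real.rpow_le_one_of_one_le_of_nonpos (jap_one_le v₀) (neg_nonpos.mpr (le_max_right _ _))
  have h2 : 0 < min 1 (Real.sqrt (t₀/2)) :=
    lt_min one_pos (Real.sqrt_pos.mpr (by linarith))
  calc r0 γ t₀ v₀ ≤ 1 * min 1 (Real.sqrt (t₀/2)) :=
        mul_le_mul_of_nonneg_right h1 h2.le
    _ = _ := one_mul _

lemma r0_mul_jap : r0 γ t₀ v₀ * jap v₀ ^ max (1 + γ/2) 0 = min 1 (Real.sqrt (t₀/2)) := by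
  rw [r0, mul_comm (jap v₀ ^ (-(max (1 + γ/2) 0))), mul_assoc,
    ← Real.rpow_add (jap_pos v₀), neg_add_cancel, Real.rpow_zero, mul_one]

end r0facts

/-- Scalar lemma A : `t₀^a ≤ C log(1/t₀)^{-b}`. -/
lemma scalarA (a b : ℝ) (ha : 0 < a) (hb : 0 < b) :
    ∃ C : ℝ, 0 < C ∧ ∀ t₀ : ℝ, 0 < t₀ → t₀ < 1/2 →
      t₀ ^ a ≤ C * Real.log (1/t₀) ^ (-b) := by
  refine ⟨Real.exp (b * (-1 - Real.log (a/b))), Real.exp_pos _, fun t₀ ht ht' => ?_⟩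
  set L : ℝ := Real.log (1/t₀) with hL
  have hL0 : 0 < L := Real.log_pos (by rw [lt_div_iff₀ ht]; linarith)
  have h1 : t₀ ^ a = Real.exp (a * Real.log t₀) := by
    rw [Real.rpow_def_of_pos ht, mul_comm]
  have h2 : Real.log t₀ = -L := by
    rw [hL, one_div, Real.log_inv, neg_neg]
  have h3 : L ^ (-b) = Real.exp ((-b) * Real.log L) := by
    rw [Real.rpow_def_of_pos hL0, mul_comm]
  rw [h1, h2, h3, ← Real.exp_add, Real.exp_le_exp]
  -- need : a * (-L) ≤ b*(-1 - log(a/b)) + (-b) * log L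
  have key : Real.log (L * (a/b)) ≤ L * (a/b) - 1 :=
    Real.log_le_sub_one_of_pos (mul_pos hL0 (div_pos ha hb))
  rw [Real.log_mul (ne_of_gt hL0) (ne_of_gt (div_pos ha hb))] at key
  have hb' : b ≠ 0 := ne_of_gt hb
  have e : b * (L * (a/b)) = a * L := by field_simp
  nlinarith [mul_le_mul_of_nonneg_left key hb.le]

/-- Scalar lemma B : the v-part estimate. -/
lemma scalarB (θ : ℝ) (hθ : 0 < θ) (t₀ d D : ℝ) (ht : 0 < t₀) (ht' : t₀ < 1/2)
    (hd : 0 < d) (hd' : d < 1/2) (hD0 : 0 ≤ D) (hD : D ≤ Real.sqrt (t₀/2) * d) :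
    Real.log (1/D) ^ (-θ) ≤
      (2:ℝ) ^ (θ/2) * Real.log (1/t₀) ^ (-(θ/2)) * Real.log (1/d) ^ (-(θ/2)) := by
  have hL : 0 < Real.log (1/t₀) := Real.log_pos (by rw [lt_div_iff₀ ht]; linarith)
  have hldp : 0 < Real.log (1/d) := Real.log_pos (by rw [lt_div_iff₀ hd]; linarith)
  have hRHS : 0 ≤ (2:ℝ) ^ (θ/2) * Real.log (1/t₀) ^ (-(θ/2)) * Real.log (1/d) ^ (-(θ/2)) := by
    have := Real.rpow_nonneg (le_of_lt hL) (-(θ/2))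
    have := Real.rpow_nonneg (le_of_lt hldp) (-(θ/2))
    have := Real.rpow_nonneg (by norm_num : (0:ℝ) ≤ 2) (θ/2)
    positivity
  rcases eq_or_lt_of_le hD0 with h0 | hDpos
  · rw [← h0, div_zero, Real.log_zero, Real.zero_rpow (by linarith)]
    exact hRHS
  set s : ℝ := Real.sqrt (t₀/2) with hs
  have hs0 : 0 < s := Real.sqrt_pos.mpr (by linarith)
  set aa : ℝ := (1/2) * Real.log (1/t₀) with haa
  set bb : ℝ := Real.log (1/d) with hbb
  have haap : 0 < aa := by positivity
  -- log (1/D) ≥ aa + bb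
  have hlog : aa + bb ≤ Real.log (1/D) := by
    have h1 : Real.log (1/D) = -Real.log D := by rw [one_div, Real.log_inv]
    have h2 : Real.log D ≤ Real.log s + Real.log d := by
      calc Real.log D ≤ Real.log (s * d) := Real.log_le_log hDpos hD
        _ = Real.log s + Real.log d := Real.log_mul (ne_of_gt hs0) (ne_of_gt hd)
    have h3 : Real.log s = Real.log (t₀/2) / 2 := Real.log_sqrt (by linarith)
    have h4 : Real.log (t₀/2) = Real.log t₀ - Real.log 2 := by
      rw [Real.log_div (ne_of_gt ht) (by norm_num)]
    have h5 : Real.log (1/t₀) = -Real.log t₀ := by rw [one_div, Real.log_inv]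
    have h6 : Real.log (1/d) = -Real.log d := by rw [one_div, Real.log_inv]
    have h7 : (0:ℝ) < Real.log 2 := Real.log_pos (by norm_num)
    rw [h1]
    rw [haa, hbb, h5, h6]
    nlinarith
  have hab : 0 < aa + bb := by positivity
  -- antitone in base
  have step1 : Real.log (1/D) ^ (-θ) ≤ (aa + bb) ^ (-θ) :=
    Real.rpow_le_rpow_of_nonpos hab hlog (by linarith)
  -- (aa+bb)^{-θ} ≤ (aa*bb)^{-θ/2}
  have step2 : (aa + bb) ^ (-θ) ≤ (aa * bb) ^ (-(θ/2)) := by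
    have habb : 0 < aa * bb := mul_pos haap hldp
    have h1 : (aa * bb) ^ (θ/2) ≤ ((aa + bb)^(2:ℕ)) ^ (θ/2) := by
      apply Real.rpow_le_rpow habb.le _ (by linarith)
      nlinarith
    have h2 : ((aa + bb)^(2:ℕ)) ^ (θ/2) = (aa + bb) ^ θ := by
      rw [← Real.rpow_natCast (aa+bb) 2, ← Real.rpow_mul hab.le]
      congr 1
      push_cast
      ring
    rw [Real.rpow_neg hab.le, Real.rpow_neg habb.le]
    apply inv_anti₀ (Real.rpow_pos_of_pos habb _)
    rw [← h2]; exact h1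
  have step3 : (aa * bb) ^ (-(θ/2)) =
      (2:ℝ) ^ (θ/2) * Real.log (1/t₀) ^ (-(θ/2)) * Real.log (1/d) ^ (-(θ/2)) := by
    rw [Real.mul_rpow haap.le hldp.le, haa,
      show (1/2 : ℝ) * Real.log (1/t₀) = (2:ℝ)⁻¹ * Real.log (1/t₀) by norm_num,
      Real.mul_rpow (by norm_num) hL.le, Real.inv_rpow (by norm_num : (0:ℝ) ≤ 2),
      ← Real.rpow_neg (by norm_num : (0:ℝ) ≤ 2), neg_neg, hbb]
  calc Real.log (1/D) ^ (-θ) ≤ (aa + bb) ^ (-θ) := step1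
    _ ≤ (aa * bb) ^ (-(θ/2)) := step2
    _ = _ := by rw [step3]



/-- The rescaling maps `Q₁` into `Q_{√(t₀/2)}(z₀)`. -/
lemma resc_mem (γ t₀ : ℝ) (x₀ v₀ : V3) (ht : 0 < t₀) {t : ℝ} {x v : V3}
    (hz : ((t, x, v) : ℝ × V3 × V3) ∈ Qcyl 1) :
    (((r0 γ t₀ v₀) ^ 2 * t + t₀,
      ((r0 γ t₀ v₀) ^ 3) • (Smat γ v₀).mulVec x + x₀ + ((r0 γ t₀ v₀) ^ 2 * t) • v₀,
      (r0 γ t₀ v₀) • (Smat γ v₀).mulVec v + v₀) : ℝ × V3 × V3)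
      ∈ Qz (Real.sqrt (t₀/2)) (t₀, x₀, v₀) := by
  obtain ⟨⟨ht1, ht2⟩, hx, hv⟩ := hz
  simp only [one_pow] at ht1 ht2 hx hv
  set r : ℝ := r0 γ t₀ v₀ with hr
  set J : ℝ := jap v₀ ^ max (1 + γ/2) 0 with hJ
  set m : ℝ := min 1 (Real.sqrt (t₀/2)) with hm
  set s : ℝ := Real.sqrt (t₀/2) with hs
  have hs0 : 0 < s := Real.sqrt_pos.mpr (by linarith)
  have hs2 : s^2 = t₀/2 := Real.sq_sqrt (by linarith)
  have hrpos : 0 < r := r0_pos γ t₀ v₀ ht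
  have hrm : r ≤ m := r0_le γ t₀ v₀ ht
  have hrJ : r * J = m := r0_mul_jap γ t₀ v₀
  have hm1 : m ≤ 1 := min_le_left _ _
  have hms : m ≤ s := min_le_right _ _
  have hm0 : 0 < m := lt_of_lt_of_le hrpos hrm
  have hJ0 : 0 < J := Real.rpow_pos_of_pos (jap_pos v₀) _
  refine ⟨?_, ?_, ?_, ?_⟩
  · -- t₀ - s² < r²t + t₀
    show t₀ - s ^ 2 < r ^ 2 * t + t₀
    have hr2 : r^2 ≤ s^2 := by nlinarith
    nlinarith
  · show r ^ 2 * t + t₀ ≤ t₀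
    nlinarith
  · -- space component
    show eunorm ((r ^ 3) • (Smat γ v₀).mulVec x + x₀ + (r ^ 2 * t) • v₀ - x₀ -
      (r ^ 2 * t + t₀ - t₀) • v₀) < s ^ 3
    rw [show r ^ 2 * t + t₀ - t₀ = r ^ 2 * t by ring,
      show (r ^ 3) • (Smat γ v₀).mulVec x + x₀ + (r ^ 2 * t) • v₀ - x₀ -
        (r ^ 2 * t) • v₀ = (r ^ 3) • (Smat γ v₀).mulVec x by abel]
    have h1 : eunorm ((r ^ 3) • (Smat γ v₀).mulVec x) ≤ r^3 * (J * eunorm x) := by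
      rw [eunorm_smul, abs_of_pos (by positivity)]
      exact mul_le_mul_of_nonneg_left (Smat_bound γ v₀ x) (by positivity)
    have h2 : r^3 * (J * eunorm x) < r^2 * m := by
      have e : r^3 * (J * eunorm x) = (r^2 * m) * eunorm x := by rw [← hrJ]; ring
      nlinarith [eunorm_nonneg x, mul_pos (pow_pos hrpos 2) hm0]
    have h3 : r^2 * m ≤ s^3 := by
      have h3a : r^2*m ≤ m^2*m := mul_le_mul_of_nonneg_right
        (pow_le_pow_left₀ hrpos.le hrm 2) hm0.le
      have h3c : m^3 ≤ s^3 := pow_le_pow_left₀ hm0.le hms 3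
      nlinarith
    linarith
  · show eunorm (r • (Smat γ v₀).mulVec v + v₀ - v₀) < s
    rw [show r • (Smat γ v₀).mulVec v + v₀ - v₀ = r • (Smat γ v₀).mulVec v by abel]
    have h1 : eunorm (r • (Smat γ v₀).mulVec v) ≤ r * (J * eunorm v) := by
      rw [eunorm_smul, abs_of_pos hrpos]
      exact mul_le_mul_of_nonneg_left (Smat_bound γ v₀ v) hrpos.le
    have h2 : r * (J * eunorm v) < m := by
      have e : r * (J * eunorm v) = m * eunorm v := by rw [← hrJ]; ring
      nlinarith [eunorm_nonneg v]
    linarith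


lemma eunorm_neg (x : V3) : eunorm (-x) = eunorm x := by
  simp [eunorm, Pi.neg_apply, neg_sq]

/-- **Scaling of the log-Hölder seminorm under the kinetic rescaling** (Lemma 4.8):
`[f_{z₀}]_{C_x^{α/3} log(1/C_v)^{−θ/2}(Q₁)} ≲ (log(1/t₀))^{−θ/2}
[f]_{C_x^{α/3} log(1/C_v)^{−θ}(Q_{√(t₀/2)}(z₀))}`.  The constant `C` depends only on
`γ`, `α`, `θ`. -/
theorem log_holder_rescaling (γ α θ : ℝ) (hγ : γ ∈ Set.Ico (-3:ℝ) 0)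
    (hα : α ∈ Set.Ioo (0:ℝ) 1) (hθ : 0 < θ) :
    ∃ C : ℝ, 0 < C ∧
      ∀ (t₀ : ℝ) (x₀ v₀ : V3) (f : ℝ × V3 × V3 → ℝ) (K : ℝ),
        0 < t₀ → t₀ < 1/2 →
        LogMixedBound α θ (Qz (Real.sqrt (t₀/2)) (t₀, x₀, v₀)) f K →
        LogMixedBound α (θ/2) (Qcyl 1) (fun z => f (resc γ (t₀, x₀, v₀) z))
          (C * Real.log (1/t₀) ^ (-(θ/2)) * K) := by
  obtain ⟨hα0, hα1⟩ := hα
  obtain ⟨C₀, hC₀, hCA⟩ := scalarA (α/3) (θ/2) (by linarith) (by linarith)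
  have h2t : (0:ℝ) < (2:ℝ) ^ (θ/2) := Real.rpow_pos_of_pos (by norm_num) _
  refine ⟨C₀ + (2:ℝ) ^ (θ/2), by positivity, ?_⟩
  intro t₀ x₀ v₀ f K ht ht' hf
  set s : ℝ := Real.sqrt (t₀/2) with hs
  have hs0 : 0 < s := Real.sqrt_pos.mpr (by linarith)
  have hs2 : s^2 = t₀/2 := Real.sq_sqrt (by linarith)
  set L : ℝ := Real.log (1/t₀) with hLdef
  have hL0 : 0 < L := Real.log_pos (by rw [lt_div_iff₀ ht]; linarith)
  have hP : 0 ≤ L ^ (-(θ/2)) := Real.rpow_nonneg hL0.le _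
  -- K is nonnegative
  have hK : 0 ≤ K := by
    set δ : ℝ := min (s^3) 1 / 4 with hδdef
    have hδ : 0 < δ := by positivity
    have hδs : δ < s^3 := by
      have h1 : min (s^3) 1 ≤ s^3 := min_le_left _ _
      have : 0 < s^3 := by positivity
      rw [hδdef]; nlinarith
    have hδh : δ < 1/2 := by
      have h1 : min (s^3) 1 ≤ 1 := min_le_right _ _
      rw [hδdef]; nlinarith
    set w : V3 := ![δ, 0, 0] with hw
    have hew : eunorm w = δ := by
      have : eunorm w = Real.sqrt (δ^2) := by
        rw [eunorm, Fin.sum_univ_three]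
        norm_num [hw, Matrix.cons_val_two, Matrix.tail_cons]
      rw [this, Real.sqrt_sq hδ.le]
    have mem1 : (t₀, x₀, v₀) ∈ Qz s (t₀, x₀, v₀) := by
      refine ⟨by nlinarith, le_refl _, ?_, ?_⟩
      · have e : x₀ - x₀ - ((t₀:ℝ) - t₀) • v₀ = 0 := by
          rw [sub_self t₀, zero_smul, sub_zero, sub_self]
        rw [show ((t₀, x₀, v₀) : ℝ × V3 × V3).2.1 - x₀ - (t₀ - t₀) • v₀ =
          x₀ - x₀ - ((t₀:ℝ) - t₀) • v₀ from rfl, e, eunorm_zero]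
        positivity
      · rw [show ((t₀, x₀, v₀) : ℝ × V3 × V3).2.2 - v₀ = v₀ - v₀ from rfl, sub_self,
          eunorm_zero]
        exact hs0
    have mem2 : (t₀, x₀ + w, v₀) ∈ Qz s (t₀, x₀, v₀) := by
      refine ⟨by nlinarith, le_refl _, ?_, ?_⟩
      · have e : x₀ + w - x₀ - ((t₀:ℝ) - t₀) • v₀ = w := by
          rw [sub_self t₀, zero_smul, sub_zero]; abel
        rw [show ((t₀, x₀ + w, v₀) : ℝ × V3 × V3).2.1 - x₀ - (t₀ - t₀) • v₀ =
          x₀ + w - x₀ - ((t₀:ℝ) - t₀) • v₀ from rfl, e, hew]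
        exact hδs
      · rw [show ((t₀, x₀ + w, v₀) : ℝ × V3 × V3).2.2 - v₀ = v₀ - v₀ from rfl, sub_self,
          eunorm_zero]
        exact hs0
    have hxd : eunorm (x₀ - (x₀ + w)) = δ := by
      rw [show x₀ - (x₀ + w) = -w by abel, eunorm_neg, hew]
    have hvd : eunorm (v₀ - v₀) = 0 := by rw [sub_self, eunorm_zero]
    have happ := hf t₀ x₀ v₀ (x₀ + w) v₀ mem1 mem2 (by rw [hxd]; linarith)
      (by rw [hvd]; norm_num)
    rw [hxd, hvd, div_zero, Real.log_zero, Real.zero_rpow (by linarith), add_zero] at happ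
    nlinarith [abs_nonneg (f (t₀, x₀, v₀) - f (t₀, x₀ + w, v₀)),
      Real.rpow_pos_of_pos hδ (α/3)]
  -- main estimate
  intro t x v x' v' hz hz' hxx hvv
  set r : ℝ := r0 γ t₀ v₀ with hr
  set SM : Matrix (Fin 3) (Fin 3) ℝ := Smat γ v₀ with hSM
  set J : ℝ := jap v₀ ^ max (1 + γ/2) 0 with hJ
  set m : ℝ := min 1 s with hm
  have hrpos : 0 < r := r0_pos γ t₀ v₀ ht
  have hrm : r ≤ m := r0_le γ t₀ v₀ ht
  have hrJ : r * J = m := r0_mul_jap γ t₀ v₀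
  have hm1 : m ≤ 1 := min_le_left _ _
  have hms : m ≤ s := min_le_right _ _
  have hm0 : 0 < m := lt_of_lt_of_le hrpos hrm
  have hJ0 : 0 < J := Real.rpow_pos_of_pos (jap_pos v₀) _
  have mem1 := resc_mem γ t₀ x₀ v₀ ht hz
  have mem2 := resc_mem γ t₀ x₀ v₀ ht hz'
  rw [← hr, ← hSM] at mem1 mem2
  set ex : ℝ := eunorm (x - x') with hex
  set ev : ℝ := eunorm (v - v') with hev
  have hex0 : 0 ≤ ex := eunorm_nonneg _
  have hev0 : 0 ≤ ev := eunorm_nonneg _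
  -- the rescaled differences
  have hXsub : ((r ^ 3) • SM.mulVec x + x₀ + (r ^ 2 * t) • v₀) -
      ((r ^ 3) • SM.mulVec x' + x₀ + (r ^ 2 * t) • v₀) = (r ^ 3) • SM.mulVec (x - x') := by
    rw [Matrix.mulVec_sub, smul_sub]; abel
  have hVsub : (r • SM.mulVec v + v₀) - (r • SM.mulVec v' + v₀) = r • SM.mulVec (v - v') := by
    rw [Matrix.mulVec_sub, smul_sub]; abel
  have hDX : eunorm ((r ^ 3) • SM.mulVec (x - x')) ≤ t₀ * ex := by
    have h1 : eunorm ((r ^ 3) • SM.mulVec (x - x')) ≤ r^3 * (J * ex) := by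
      rw [eunorm_smul, abs_of_pos (by positivity)]
      exact mul_le_mul_of_nonneg_left (Smat_bound γ v₀ (x - x')) (by positivity)
    have h2 : r^3 * J ≤ t₀ := by
      have e : r^3 * J = r^2 * m := by rw [← hrJ]; ring
      nlinarith
    calc eunorm ((r ^ 3) • SM.mulVec (x - x')) ≤ r^3 * (J * ex) := h1
      _ = (r^3 * J) * ex := by ring
      _ ≤ t₀ * ex := mul_le_mul_of_nonneg_right h2 hex0
  have hDV : eunorm (r • SM.mulVec (v - v')) ≤ s * ev := by
    have h1 : eunorm (r • SM.mulVec (v - v')) ≤ r * (J * ev) := by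
      rw [eunorm_smul, abs_of_pos hrpos]
      exact mul_le_mul_of_nonneg_left (Smat_bound γ v₀ (v - v')) hrpos.le
    have h2 : r * J ≤ s := le_trans (le_of_eq hrJ) hms
    calc eunorm (r • SM.mulVec (v - v')) ≤ r * (J * ev) := h1
      _ = (r * J) * ev := by ring
      _ ≤ s * ev := mul_le_mul_of_nonneg_right h2 hev0
  have hDXhalf : eunorm ((r ^ 3) • SM.mulVec (x - x')) < 1/2 := by
    have h2 : t₀ * ex ≤ 1 * ex := mul_le_mul_of_nonneg_right (by linarith) hex0
    have := hDX
    linarith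
  have hDVhalf : eunorm (r • SM.mulVec (v - v')) < 1/2 := by
    have hs1 : s ≤ 1 := Real.sqrt_le_one.mpr (by linarith)
    have h2 : s * ev ≤ 1 * ev := mul_le_mul_of_nonneg_right hs1 hev0
    have := hDV
    linarith
  have key := hf (r ^ 2 * t + t₀)
      ((r ^ 3) • SM.mulVec x + x₀ + (r ^ 2 * t) • v₀) (r • SM.mulVec v + v₀)
      ((r ^ 3) • SM.mulVec x' + x₀ + (r ^ 2 * t) • v₀) (r • SM.mulVec v' + v₀)
      mem1 mem2 (by rw [hXsub]; exact hDXhalf) (by rw [hVsub]; exact hDVhalf)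
  rw [hXsub, hVsub] at key
  -- bound term 1
  have hterm1 : eunorm ((r ^ 3) • SM.mulVec (x - x')) ^ (α/3) ≤
      C₀ * L ^ (-(θ/2)) * ex ^ (α/3) := by
    calc eunorm ((r ^ 3) • SM.mulVec (x - x')) ^ (α/3) ≤ (t₀ * ex) ^ (α/3) :=
          Real.rpow_le_rpow (eunorm_nonneg _) hDX (by linarith)
      _ = t₀ ^ (α/3) * ex ^ (α/3) := Real.mul_rpow ht.le hex0
      _ ≤ (C₀ * L ^ (-(θ/2))) * ex ^ (α/3) :=
          mul_le_mul_of_nonneg_right (hCA t₀ ht ht') (Real.rpow_nonneg hex0 _)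
      _ = C₀ * L ^ (-(θ/2)) * ex ^ (α/3) := by ring
  -- bound term 2
  have hE2 : 0 ≤ Real.log (1/ev) ^ (-(θ/2)) := by
    rcases eq_or_lt_of_le hev0 with h0 | h0
    · rw [← h0, div_zero, Real.log_zero, Real.zero_rpow (by linarith)]
    · exact Real.rpow_nonneg (Real.log_nonneg (by rw [le_div_iff₀ h0]; linarith)) _
  have hterm2 : Real.log (1/eunorm (r • SM.mulVec (v - v'))) ^ (-θ) ≤
      (2:ℝ)^(θ/2) * L ^ (-(θ/2)) * Real.log (1/ev) ^ (-(θ/2)) := by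
    rcases eq_or_lt_of_le hev0 with h0 | h0
    · have hv0 : v - v' = 0 := eunorm_eq_zero (hev ▸ h0.symm)
      rw [hv0, Matrix.mulVec_zero, smul_zero, eunorm_zero, div_zero, Real.log_zero,
        Real.zero_rpow (by linarith : -θ ≠ 0)]
      exact mul_nonneg (mul_nonneg h2t.le hP) hE2
    · exact scalarB θ hθ t₀ ev _ ht ht' h0 hvv (eunorm_nonneg _) hDV
  have goal_eq1 : ((fun z => f (resc γ (t₀, x₀, v₀) z)) ((t, x, v) : ℝ × V3 × V3) : ℝ) =
      f (r ^ 2 * t + t₀, (r ^ 3) • SM.mulVec x + x₀ + (r ^ 2 * t) • v₀,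
        r • SM.mulVec v + v₀) := rfl
  have goal_eq2 : ((fun z => f (resc γ (t₀, x₀, v₀) z)) ((t, x', v') : ℝ × V3 × V3) : ℝ) =
      f (r ^ 2 * t + t₀, (r ^ 3) • SM.mulVec x' + x₀ + (r ^ 2 * t) • v₀,
        r • SM.mulVec v' + v₀) := rfl
  rw [goal_eq1, goal_eq2]
  have hE1 : 0 ≤ ex ^ (α/3) := Real.rpow_nonneg hex0 _
  calc |f (r ^ 2 * t + t₀, (r ^ 3) • SM.mulVec x + x₀ + (r ^ 2 * t) • v₀,
          r • SM.mulVec v + v₀) -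
        f (r ^ 2 * t + t₀, (r ^ 3) • SM.mulVec x' + x₀ + (r ^ 2 * t) • v₀,
          r • SM.mulVec v' + v₀)|
      ≤ K * (eunorm ((r ^ 3) • SM.mulVec (x - x')) ^ (α/3) +
          Real.log (1/eunorm (r • SM.mulVec (v - v'))) ^ (-θ)) := key
    _ ≤ K * (C₀ * L ^ (-(θ/2)) * ex ^ (α/3) +
          (2:ℝ)^(θ/2) * L ^ (-(θ/2)) * Real.log (1/ev) ^ (-(θ/2))) :=
        mul_le_mul_of_nonneg_left (add_le_add hterm1 hterm2) hK
    _ ≤ ((C₀ + (2:ℝ)^(θ/2)) * L ^ (-(θ/2)) * K) *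
          (ex ^ (α/3) + Real.log (1/ev) ^ (-(θ/2))) := by
        have expand : ((C₀ + (2:ℝ)^(θ/2)) * L ^ (-(θ/2)) * K) *
              (ex ^ (α/3) + Real.log (1/ev) ^ (-(θ/2))) -
            K * (C₀ * L ^ (-(θ/2)) * ex ^ (α/3) +
              (2:ℝ)^(θ/2) * L ^ (-(θ/2)) * Real.log (1/ev) ^ (-(θ/2))) =
            K * (L ^ (-(θ/2)) * ((2:ℝ)^(θ/2) * ex ^ (α/3) +
              C₀ * Real.log (1/ev) ^ (-(θ/2)))) := by ring
        have nn : 0 ≤ K * (L ^ (-(θ/2)) * ((2:ℝ)^(θ/2) * ex ^ (α/3) +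
            C₀ * Real.log (1/ev) ^ (-(θ/2)))) :=
          mul_nonneg hK (mul_nonneg hP (add_nonneg (mul_nonneg h2t.le hE1)
            (mul_nonneg hC₀.le hE2)))
        linarith
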